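/- Assume additionally that q := (L1 + L2) M0 < 1, where M0 = max_{t∈[0,1]} ∫₀¹ |G(t,s)| ds, and let u be the unique continuous function on [0,1] satisfying u(t) = g(t) + ∫₀¹ G(t,s) f(s, u(s), u(φ(s))) ds for all t ∈ [0,1]. Set p_k = q^k/(1 − q) and d = max_{t∈[0,1]} |ψ_1(t) − ψ_0(t)|. Then for every fixed integer k ≥ 0 there exists a constant C > 0 such that for every integer N ≥ 1, with h = 1/N, one has max_{0 ≤ i ≤ N} |U_k(t_i) − u(t_i)| ≤ M0 p_k d + C h². -/

import Mathlib

open Set MeasureTheory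

/-- The Green function of the problem `u''' = ψ`, `u(0) = u'(0) = u'(1) = 0` on `[0,1]`. -/
noncomputable def G01 (t s : ℝ) : ℝ :=
  if s ≤ t then s / 2 * (t ^ 2 - 2 * t + s) else t ^ 2 / 2 * (s - 1)

/-- The quadratic polynomial with `g(0) = b1`, `g'(0) = b2`, `g'(1) = b3`. -/
noncomputable def gq (b1 b2 b3 t : ℝ) : ℝ := b1 + b2 * t + (b3 - b2) / 2 * t ^ 2

/-- Trapezoidal weights: `ρ_0 = ρ_N = 1/2` and `ρ_j = 1` for `1 ≤ j ≤ N − 1`. -/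
noncomputable def trapWeight (N j : ℕ) : ℝ := if j = 0 ∨ j = N then 1 / 2 else 1

/-- Continuous iteration: `ψ₀(t) = f(t,0,0)`, `ψ_{k+1}(t) = f(t, u_k(t), v_k(t))`, where
`u_k(t) = g(t) + ∫₀¹ G(t,s) ψ_k(s) ds` and `v_k(t) = u_k(φ(t))`. -/
noncomputable def psiC (f : ℝ → ℝ → ℝ → ℝ) (φ : ℝ → ℝ) (b1 b2 b3 : ℝ) : ℕ → ℝ → ℝ
  | 0 => fun t => f t 0 0
  | k + 1 => fun t =>
      f t (gq b1 b2 b3 t + ∫ s in (0:ℝ)..1, G01 t s * psiC f φ b1 b2 b3 k s)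
        (gq b1 b2 b3 (φ t) + ∫ s in (0:ℝ)..1, G01 (φ t) s * psiC f φ b1 b2 b3 k s)

/-- `u_k(t) = g(t) + ∫₀¹ G(t,s) ψ_k(s) ds`. -/
noncomputable def uC (f : ℝ → ℝ → ℝ → ℝ) (φ : ℝ → ℝ) (b1 b2 b3 : ℝ) (k : ℕ) (t : ℝ) : ℝ :=
  gq b1 b2 b3 t + ∫ s in (0:ℝ)..1, G01 t s * psiC f φ b1 b2 b3 k s

/-- `v_k(t) = u_k(φ(t))`. -/
noncomputable def vC (f : ℝ → ℝ → ℝ → ℝ) (φ : ℝ → ℝ) (b1 b2 b3 : ℝ) (k : ℕ) (t : ℝ) : ℝ :=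
  uC f φ b1 b2 b3 k (φ t)

/-- Discrete iteration: `Ψ₀(t_i) = f(t_i,0,0)`,
`Ψ_{k+1}(t_i) = f(t_i, U_k(t_i), V_k(t_i))`, where `U_k`, `V_k` are trapezoidal
approximations of `u_k`, `v_k` on the uniform grid `t_i = i/N`. -/
noncomputable def PsiD (f : ℝ → ℝ → ℝ → ℝ) (φ : ℝ → ℝ) (b1 b2 b3 : ℝ) (N : ℕ) :
    ℕ → ℕ → ℝ
  | 0 => fun i => f ((i : ℝ) / N) 0 0
  | k + 1 => fun i =>
      f ((i : ℝ) / N)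
        (gq b1 b2 b3 ((i : ℝ) / N) + ∑ j ∈ Finset.range (N + 1),
          (1 / (N:ℝ)) * trapWeight N j * G01 ((i : ℝ) / N) ((j : ℝ) / N) *
            PsiD f φ b1 b2 b3 N k j)
        (gq b1 b2 b3 (φ ((i : ℝ) / N)) + ∑ j ∈ Finset.range (N + 1),
          (1 / (N:ℝ)) * trapWeight N j * G01 (φ ((i : ℝ) / N)) ((j : ℝ) / N) *
            PsiD f φ b1 b2 b3 N k j)

/-- `U_k(t_i) = g(t_i) + Σ_j h ρ_j G(t_i, t_j) Ψ_k(t_j)`. -/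
noncomputable def UD (f : ℝ → ℝ → ℝ → ℝ) (φ : ℝ → ℝ) (b1 b2 b3 : ℝ) (N k i : ℕ) : ℝ :=
  gq b1 b2 b3 ((i : ℝ) / N) + ∑ j ∈ Finset.range (N + 1),
    (1 / (N:ℝ)) * trapWeight N j * G01 ((i : ℝ) / N) ((j : ℝ) / N) * PsiD f φ b1 b2 b3 N k j

/-- `V_k(t_i) = g(ξ_i) + Σ_j h ρ_j G(ξ_i, t_j) Ψ_k(t_j)`, with `ξ_i = φ(t_i)`. -/
noncomputable def VD (f : ℝ → ℝ → ℝ → ℝ) (φ : ℝ → ℝ) (b1 b2 b3 : ℝ) (N k i : ℕ) : ℝ :=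
  gq b1 b2 b3 (φ ((i : ℝ) / N)) + ∑ j ∈ Finset.range (N + 1),
    (1 / (N:ℝ)) * trapWeight N j * G01 (φ ((i : ℝ) / N)) ((j : ℝ) / N) *
      PsiD f φ b1 b2 b3 N k j

lemma G01_cont (t : ℝ) : Continuous (fun s => G01 t s) := by
  unfold G01
  apply Continuous.if_le
  · exact (continuous_id.div_const 2).mul (by continuity)
  · continuity
  · exact continuous_id
  · exact continuous_const
  · intro s hs; subst hs; ring

lemma G01_bound {t s : ℝ} (ht : t ∈ Icc (0:ℝ) 1) (hs : s ∈ Icc (0:ℝ) 1) : |G01 t s| ≤ 1 := by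
  obtain ⟨ht0, ht1⟩ := ht; obtain ⟨hs0, hs1⟩ := hs
  unfold G01
  split_ifs with h
  · rw [abs_le]; constructor <;> nlinarith
  · rw [abs_le]; constructor <;> nlinarith

lemma lipA {t x y : ℝ} (ht : t ∈ Icc (0:ℝ) 1) (hx : x ∈ Icc (0:ℝ) 1) (hy : y ∈ Icc (0:ℝ) 1) :
    |x / 2 * (t ^ 2 - 2 * t + x) - y / 2 * (t ^ 2 - 2 * t + y)| ≤ 2 * |x - y| := by
  obtain ⟨ht0, ht1⟩ := ht; obtain ⟨hx0, hx1⟩ := hx; obtain ⟨hy0, hy1⟩ := hy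
  have h : x / 2 * (t ^ 2 - 2 * t + x) - y / 2 * (t ^ 2 - 2 * t + y)
      = (x - y) * ((t ^ 2 - 2 * t + x + y) / 2) := by ring
  rw [h, abs_mul]
  have h2 : |(t ^ 2 - 2 * t + x + y) / 2| ≤ 2 := by
    rw [abs_le]; constructor <;> nlinarith
  calc |x - y| * |(t ^ 2 - 2 * t + x + y) / 2| ≤ |x - y| * 2 :=
        mul_le_mul_of_nonneg_left h2 (abs_nonneg _)
    _ = 2 * |x - y| := by ring

lemma lipB {t x y : ℝ} (ht : t ∈ Icc (0:ℝ) 1) :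
    |t ^ 2 / 2 * (x - 1) - t ^ 2 / 2 * (y - 1)| ≤ 2 * |x - y| := by
  obtain ⟨ht0, ht1⟩ := ht
  have h : t ^ 2 / 2 * (x - 1) - t ^ 2 / 2 * (y - 1) = (x - y) * (t ^ 2 / 2) := by ring
  rw [h, abs_mul]
  have h2 : |t ^ 2 / 2| ≤ 2 := by rw [abs_le]; constructor <;> nlinarith
  calc |x - y| * |t ^ 2 / 2| ≤ |x - y| * 2 := mul_le_mul_of_nonneg_left h2 (abs_nonneg _)
    _ = 2 * |x - y| := by ring

lemma G01_lip {t x y : ℝ} (ht : t ∈ Icc (0:ℝ) 1) (hx : x ∈ Icc (0:ℝ) 1) (hy : y ∈ Icc (0:ℝ) 1) :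
    |G01 t x - G01 t y| ≤ 4 * |x - y| := by
  have htt : t ∈ Icc (0:ℝ) 1 := ht
  unfold G01
  split_ifs with h1 h2 h2
  · calc |x / 2 * (t ^ 2 - 2 * t + x) - y / 2 * (t ^ 2 - 2 * t + y)| ≤ 2 * |x - y| :=
        lipA ht hx hy
      _ ≤ 4 * |x - y| := by nlinarith [abs_nonneg (x - y)]
  · -- x ≤ t < y
    push_neg at h2
    have key : x / 2 * (t ^ 2 - 2 * t + x) - t ^ 2 / 2 * (y - 1)
        = (x / 2 * (t ^ 2 - 2 * t + x) - t / 2 * (t ^ 2 - 2 * t + t))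
          + (t ^ 2 / 2 * (t - 1) - t ^ 2 / 2 * (y - 1)) := by ring
    rw [key]
    have e1 := lipA ht hx htt
    have e2 := lipB (x := t) (y := y) ht
    have hxy : |x - t| + |t - y| = |x - y| := by
      rw [abs_of_nonpos (by linarith), abs_of_nonpos (by linarith), abs_of_nonpos (by linarith)]
      ring
    calc |(x / 2 * (t ^ 2 - 2 * t + x) - t / 2 * (t ^ 2 - 2 * t + t))
          + (t ^ 2 / 2 * (t - 1) - t ^ 2 / 2 * (y - 1))|
        ≤ |x / 2 * (t ^ 2 - 2 * t + x) - t / 2 * (t ^ 2 - 2 * t + t)|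
          + |t ^ 2 / 2 * (t - 1) - t ^ 2 / 2 * (y - 1)| := abs_add_le _ _
      _ ≤ 2 * |x - t| + 2 * |t - y| := add_le_add e1 e2
      _ ≤ 4 * |x - y| := by nlinarith [abs_nonneg (x - t), abs_nonneg (t - y), hxy]
  · -- y ≤ t < x
    push_neg at h1
    have key : t ^ 2 / 2 * (x - 1) - y / 2 * (t ^ 2 - 2 * t + y)
        = (t ^ 2 / 2 * (x - 1) - t ^ 2 / 2 * (t - 1))
          + (t / 2 * (t ^ 2 - 2 * t + t) - y / 2 * (t ^ 2 - 2 * t + y)) := by ring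
    rw [key]
    have e1 := lipB (x := x) (y := t) ht
    have e2 := lipA ht htt hy
    have hxy : |x - t| + |t - y| = |x - y| := by
      rw [abs_of_nonneg (by linarith), abs_of_nonneg (by linarith), abs_of_nonneg (by linarith)]
      ring
    calc |(t ^ 2 / 2 * (x - 1) - t ^ 2 / 2 * (t - 1))
          + (t / 2 * (t ^ 2 - 2 * t + t) - y / 2 * (t ^ 2 - 2 * t + y))|
        ≤ |t ^ 2 / 2 * (x - 1) - t ^ 2 / 2 * (t - 1)|
          + |t / 2 * (t ^ 2 - 2 * t + t) - y / 2 * (t ^ 2 - 2 * t + y)| := abs_add_le _ _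
      _ ≤ 2 * |x - t| + 2 * |t - y| := add_le_add e1 e2
      _ ≤ 4 * |x - y| := by nlinarith [abs_nonneg (x - t), abs_nonneg (t - y), hxy]
  · calc |t ^ 2 / 2 * (x - 1) - t ^ 2 / 2 * (y - 1)| ≤ 2 * |x - y| := lipB ht
      _ ≤ 4 * |x - y| := by nlinarith [abs_nonneg (x - y)]

/-- Trapezoid error for a Lipschitz function. -/
lemma trap0 {a b LF : ℝ} (hab : a ≤ b) (F : ℝ → ℝ)
    (hc : ContinuousOn F (Icc a b)) (hLF : 0 ≤ LF)
    (hLip : ∀ x ∈ Icc a b, ∀ y ∈ Icc a b, |F x - F y| ≤ LF * |x - y|) :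
    |(∫ s in a..b, F s) - (b - a) / 2 * (F a + F b)| ≤ LF * (b - a) ^ 2 := by
  have hI : IntervalIntegrable F volume a b :=
    (hc.mono (by rw [uIcc_of_le hab])).intervalIntegrable
  have hconst : (b - a) / 2 * (F a + F b) = ∫ _ in a..b, (F a + F b) / 2 := by
    rw [intervalIntegral.integral_const]; simp [smul_eq_mul]; ring
  rw [hconst, ← intervalIntegral.integral_sub hI (intervalIntegrable_const)]
  have key : ∀ x ∈ Set.uIoc a b, ‖F x - (F a + F b) / 2‖ ≤ LF * (b - a) := by
    intro x hx
    rw [Set.uIoc_of_le hab] at hx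
    have hxm : x ∈ Icc a b := ⟨hx.1.le, hx.2⟩
    have h1 := hLip x hxm a ⟨le_refl a, hab⟩
    have h2 := hLip x hxm b ⟨hab, le_refl b⟩
    have e : F x - (F a + F b) / 2 = (F x - F a) / 2 + (F x - F b) / 2 := by ring
    rw [Real.norm_eq_abs, e]
    have hxa : |x - a| ≤ b - a := by rw [abs_of_nonneg (by linarith [hx.1.le])]; linarith [hx.2]
    have hxb : |x - b| ≤ b - a := by rw [abs_of_nonpos (by linarith [hx.2])]; linarith [hx.1.le]
    have tri := abs_add_le ((F x - F a) / 2) ((F x - F b) / 2)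
    rw [abs_div, abs_div] at tri
    have h2ab : |(2:ℝ)| = 2 := by norm_num
    rw [h2ab] at tri
    have m1 : LF * |x - a| ≤ LF * (b - a) := mul_le_mul_of_nonneg_left hxa hLF
    have m2 : LF * |x - b| ≤ LF * (b - a) := mul_le_mul_of_nonneg_left hxb hLF
    linarith
  calc ‖∫ x in a..b, (F x - (F a + F b) / 2)‖ ≤ LF * (b - a) * |b - a| :=
        intervalIntegral.norm_integral_le_of_norm_le_const key
    _ = LF * (b - a) ^ 2 := by rw [abs_of_nonneg (by linarith)]; ring

/-- Trapezoid error for a C¹ function with Lipschitz derivative. -/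
lemma trap1 {a b K : ℝ} (hab : a ≤ b) (F F' : ℝ → ℝ)
    (hF : ∀ x ∈ Icc a b, HasDerivWithinAt F (F' x) (Icc a b) x) (hK : 0 ≤ K)
    (hLip : ∀ x ∈ Icc a b, ∀ y ∈ Icc a b, |F' x - F' y| ≤ K * |x - y|) :
    |(∫ s in a..b, F s) - (b - a) / 2 * (F a + F b)| ≤ K * (b - a) ^ 3 := by
  rcases eq_or_lt_of_le hab with rfl | hlt
  · simp
  have hba : b - a ≠ 0 := sub_ne_zero.mpr (ne_of_gt hlt)
  have hcF : ContinuousOn F (Icc a b) := fun x hx => (hF x hx).continuousWithinAt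
  obtain ⟨ξ, hξ, hslope⟩ := exists_hasDerivAt_eq_slope F F' hlt hcF
    (fun x hx => (hF x ⟨hx.1.le, hx.2.le⟩).hasDerivAt (Icc_mem_nhds hx.1 hx.2))
  set c : ℝ := (F b - F a) / (b - a) with hc
  have hξm : ξ ∈ Icc a b := ⟨hξ.1.le, hξ.2.le⟩
  have hlind : ∀ x : ℝ, HasDerivAt (fun y => F a + c * (y - a)) c x := by
    intro x
    have h0 : HasDerivAt (fun y : ℝ => c * (y - a)) (c * 1) x :=
      ((hasDerivAt_id x).sub_const a).const_mul c
    rw [mul_one] at h0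
    exact h0.const_add (F a)
  set D : ℝ → ℝ := fun x => F x - (F a + c * (x - a)) with hD
  have hDd : ∀ x ∈ Icc a b, HasDerivWithinAt D (F' x - c) (Icc a b) x := by
    intro x hx
    exact (hF x hx).sub ((hlind x).hasDerivWithinAt)
  have hDb : ∀ x ∈ Icc a b, |F' x - c| ≤ K * (b - a) := by
    intro x hx
    rw [← hslope]
    calc |F' x - F' ξ| ≤ K * |x - ξ| := hLip x hx ξ hξm
      _ ≤ K * (b - a) := by
          apply mul_le_mul_of_nonneg_left _ hK
          rw [abs_le]
          constructor
          · linarith [hx.1, hξm.2]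
          · linarith [hx.2, hξm.1]
  have hDbound : ∀ x ∈ Icc a b, |D x| ≤ K * (b - a) ^ 2 := by
    intro x hx
    have key := Convex.norm_image_sub_le_of_norm_hasDerivWithin_le hDd
      (fun y hy => by rw [Real.norm_eq_abs]; exact hDb y hy) (convex_Icc a b)
      (⟨le_refl a, hab⟩ : a ∈ Icc a b) hx
    rw [Real.norm_eq_abs, Real.norm_eq_abs] at key
    have hDa : D a = 0 := by simp [hD]
    rw [hDa, sub_zero] at key
    calc |D x| ≤ K * (b - a) * |x - a| := key
      _ ≤ K * (b - a) * (b - a) := by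
          apply mul_le_mul_of_nonneg_left _ (by nlinarith)
          rw [abs_of_nonneg (by linarith [hx.1])]; linarith [hx.2]
      _ = K * (b - a) ^ 2 := by ring
  have hci : ∀ g : ℝ → ℝ, Continuous g → IntervalIntegrable g volume a b :=
    fun g hg => hg.intervalIntegrable a b
  have hlin : (∫ x in a..b, (F a + c * (x - a))) = (b - a) / 2 * (F a + F b) := by
    have h1 : (∫ x in a..b, (F a + c * (x - a)))
        = (∫ _ in a..b, F a) + ∫ x in a..b, c * (x - a) := by
      exact intervalIntegral.integral_add intervalIntegrable_const
        (hci _ (by continuity))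
    have h2 : (∫ x in a..b, c * (x - a)) = c * ((b - a) ^ 2 / 2) := by
      rw [intervalIntegral.integral_const_mul]
      have h3 : (∫ x in a..b, (x - a)) = (∫ x in a..b, x) - ∫ _ in a..b, a :=
        intervalIntegral.integral_sub (hci _ continuous_id) intervalIntegrable_const
      rw [h3, integral_id, intervalIntegral.integral_const, smul_eq_mul]
      ring
    rw [h1, h2, intervalIntegral.integral_const, hc]
    rw [smul_eq_mul]
    field_simp
    ring
  have hIF : IntervalIntegrable F volume a b :=
    (hcF.mono (by rw [uIcc_of_le hab])).intervalIntegrable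
  have hIl : IntervalIntegrable (fun x => F a + c * (x - a)) volume a b := hci _ (by continuity)
  have hsplit : (∫ s in a..b, F s) - (b - a) / 2 * (F a + F b) = ∫ x in a..b, D x := by
    rw [← hlin, ← intervalIntegral.integral_sub hIF hIl]
  rw [hsplit]
  have key2 : ‖∫ x in a..b, D x‖ ≤ K * (b - a) ^ 2 * |b - a| := by
    apply intervalIntegral.norm_integral_le_of_norm_le_const
    intro x hx
    rw [Set.uIoc_of_le hab] at hx
    rw [Real.norm_eq_abs]
    exact hDbound x ⟨hx.1.le, hx.2⟩
  rw [Real.norm_eq_abs] at key2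
  calc |∫ x in a..b, D x| ≤ K * (b - a) ^ 2 * |b - a| := key2
    _ = K * (b - a) ^ 3 := by rw [abs_of_nonneg (by linarith)]; ring

lemma resum (N : ℕ) (hN : 1 ≤ N) (F : ℕ → ℝ) :
    ∑ j ∈ Finset.range (N+1), trapWeight N j * F j
      = ∑ j ∈ Finset.range N, (F j + F (j+1)) / 2 := by
  have key : ∀ j ∈ Finset.range (N+1), trapWeight N j * F j
      = F j - (if j = 0 then F 0 / 2 else 0) - (if j = N then F N / 2 else 0) := by
    intro j _
    by_cases h0 : j = 0 <;> by_cases hN' : j = N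
    · omega
    · subst h0; simp [trapWeight, hN']; ring
    · subst hN'; simp [trapWeight, h0]; ring
    · simp [trapWeight, h0, hN']
  rw [Finset.sum_congr rfl key]
  have e0 : (0:ℕ) ∈ Finset.range (N+1) := by simp
  have eN : N ∈ Finset.range (N+1) := by simp
  rw [Finset.sum_sub_distrib, Finset.sum_sub_distrib, Finset.sum_ite_eq' _ 0 (fun _ => F 0 / 2),
    Finset.sum_ite_eq' _ N (fun _ => F N / 2), if_pos e0, if_pos eN]
  have e1 : ∑ j ∈ Finset.range (N+1), F j = (∑ j ∈ Finset.range N, F j) + F N :=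
    Finset.sum_range_succ F N
  have e2 : ∑ j ∈ Finset.range (N+1), F j = (∑ j ∈ Finset.range N, F (j+1)) + F 0 :=
    Finset.sum_range_succ' F N
  have e3 : ∑ j ∈ Finset.range N, (F j + F (j+1)) / 2
      = (∑ j ∈ Finset.range N, F j) / 2 + (∑ j ∈ Finset.range N, F (j+1)) / 2 := by
    rw [← Finset.sum_div, Finset.sum_add_distrib]; ring
  linarith


lemma goodInterval {tstar a b : ℝ} (ht : tstar ∈ Icc (0:ℝ) 1) (hab : a ≤ b)
    (hsub : Icc a b ⊆ Icc (0:ℝ) 1)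
    (ψ ψ₁ : ℝ → ℝ) (B0 B1 B2 : ℝ) (hB0p : 0 ≤ B0) (hB1p : 0 ≤ B1) (hB2p : 0 ≤ B2)
    (hψd : ∀ x ∈ Icc (0:ℝ) 1, HasDerivWithinAt ψ (ψ₁ x) (Icc (0:ℝ) 1) x)
    (hB0 : ∀ x ∈ Icc (0:ℝ) 1, |ψ x| ≤ B0)
    (hψlip : ∀ x ∈ Icc (0:ℝ) 1, ∀ y ∈ Icc (0:ℝ) 1, |ψ x - ψ y| ≤ B1 * |x - y|)
    (hB1 : ∀ x ∈ Icc (0:ℝ) 1, |ψ₁ x| ≤ B1)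
    (hψ₁lip : ∀ x ∈ Icc (0:ℝ) 1, ∀ y ∈ Icc (0:ℝ) 1, |ψ₁ x - ψ₁ y| ≤ B2 * |x - y|)
    (p p' : ℝ → ℝ) (hpd : ∀ x, HasDerivAt p (p' x) x)
    (hpG : ∀ s ∈ Icc a b, G01 tstar s = p s)
    (hp'b : ∀ s ∈ Icc a b, |p' s| ≤ 2)
    (hp'lip : ∀ x ∈ Icc a b, ∀ y ∈ Icc a b, |p' x - p' y| ≤ 1 * |x - y|) :
    |(∫ s in a..b, G01 tstar s * ψ s)
        - (b - a)/2 * (G01 tstar a * ψ a + G01 tstar b * ψ b)|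
      ≤ (B0 + 6*B1 + B2) * (b - a)^3 := by
  have ha : a ∈ Icc a b := ⟨le_refl a, hab⟩
  have hb : b ∈ Icc a b := ⟨hab, le_refl b⟩
  have hEq : EqOn (fun s => G01 tstar s * ψ s) (fun s => p s * ψ s) (uIcc a b) := by
    rw [uIcc_of_le hab]; intro s hs; simp only; rw [hpG s hs]
  rw [intervalIntegral.integral_congr hEq, hpG a ha, hpG b hb]
  have hpb : ∀ s ∈ Icc a b, |p s| ≤ 1 := by
    intro s hs; rw [← hpG s hs]; exact G01_bound ht (hsub hs)
  have hplip : ∀ x ∈ Icc a b, ∀ y ∈ Icc a b, |p x - p y| ≤ 4 * |x - y| := by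
    intro x hx y hy; rw [← hpG x hx, ← hpG y hy]; exact G01_lip ht (hsub hx) (hsub hy)
  apply trap1 hab _ (fun s => p' s * ψ s + p s * ψ₁ s)
  · intro x hx
    exact ((hpd x).hasDerivWithinAt).mul ((hψd x (hsub hx)).mono hsub)
  · positivity
  · intro x hx y hy
    have hxI := hsub hx; have hyI := hsub hy
    have e : p' x * ψ x + p x * ψ₁ x - (p' y * ψ y + p y * ψ₁ y)
        = (p' x - p' y) * ψ x + p' y * (ψ x - ψ y)
          + ((p x - p y) * ψ₁ x + p y * (ψ₁ x - ψ₁ y)) := by ring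
    have h1 : |(p' x - p' y) * ψ x| ≤ (1 * |x - y|) * B0 := by
      rw [abs_mul]
      exact mul_le_mul (hp'lip x hx y hy) (hB0 x hxI) (abs_nonneg _) (by positivity)
    have h2 : |p' y * (ψ x - ψ y)| ≤ 2 * (B1 * |x - y|) := by
      rw [abs_mul]
      exact mul_le_mul (hp'b y hy) (hψlip x hxI y hyI) (abs_nonneg _) (by norm_num)
    have h3 : |(p x - p y) * ψ₁ x| ≤ (4 * |x - y|) * B1 := by
      rw [abs_mul]
      exact mul_le_mul (hplip x hx y hy) (hB1 x hxI) (abs_nonneg _) (by positivity)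
    have h4 : |p y * (ψ₁ x - ψ₁ y)| ≤ 1 * (B2 * |x - y|) := by
      rw [abs_mul]
      exact mul_le_mul (hpb y hy) (hψ₁lip x hxI y hyI) (abs_nonneg _) (by norm_num)
    calc |p' x * ψ x + p x * ψ₁ x - (p' y * ψ y + p y * ψ₁ y)|
        = |(p' x - p' y) * ψ x + p' y * (ψ x - ψ y)
            + ((p x - p y) * ψ₁ x + p y * (ψ₁ x - ψ₁ y))| := by rw [e]
      _ ≤ |(p' x - p' y) * ψ x + p' y * (ψ x - ψ y)|
            + |(p x - p y) * ψ₁ x + p y * (ψ₁ x - ψ₁ y)| := abs_add_le _ _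
      _ ≤ (|(p' x - p' y) * ψ x| + |p' y * (ψ x - ψ y)|)
            + (|(p x - p y) * ψ₁ x| + |p y * (ψ₁ x - ψ₁ y)|) :=
          add_le_add (abs_add_le _ _) (abs_add_le _ _)
      _ ≤ ((1 * |x - y|) * B0 + 2 * (B1 * |x - y|)) + ((4 * |x - y|) * B1 + 1 * (B2 * |x - y|)) :=
          add_le_add (add_le_add h1 h2) (add_le_add h3 h4)
      _ = (B0 + 6*B1 + B2) * |x - y| := by ring

/-- Master trapezoid estimate for `F(s) = G01 t* s * ψ(s)`. -/
lemma trapMaster {tstar : ℝ} (ht : tstar ∈ Icc (0:ℝ) 1)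
    (ψ ψ₁ : ℝ → ℝ) (B0 B1 B2 : ℝ) (hB0p : 0 ≤ B0) (hB1p : 0 ≤ B1) (hB2p : 0 ≤ B2)
    (hψd : ∀ x ∈ Icc (0:ℝ) 1, HasDerivWithinAt ψ (ψ₁ x) (Icc (0:ℝ) 1) x)
    (hB0 : ∀ x ∈ Icc (0:ℝ) 1, |ψ x| ≤ B0)
    (hψlip : ∀ x ∈ Icc (0:ℝ) 1, ∀ y ∈ Icc (0:ℝ) 1, |ψ x - ψ y| ≤ B1 * |x - y|)
    (hB1 : ∀ x ∈ Icc (0:ℝ) 1, |ψ₁ x| ≤ B1)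
    (hψ₁lip : ∀ x ∈ Icc (0:ℝ) 1, ∀ y ∈ Icc (0:ℝ) 1, |ψ₁ x - ψ₁ y| ≤ B2 * |x - y|)
    (N : ℕ) (hN : 1 ≤ N) :
    |(∑ j ∈ Finset.range (N + 1),
        (1 / (N:ℝ)) * trapWeight N j * G01 tstar ((j:ℝ)/N) * ψ ((j:ℝ)/N))
      - ∫ s in (0:ℝ)..1, G01 tstar s * ψ s| ≤ (5*B0 + 7*B1 + B2) * (1/(N:ℝ))^2 := by
  have hNR : (0:ℝ) < N := by exact_mod_cast hN
  have hNne : (N:ℝ) ≠ 0 := ne_of_gt hNR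
  set F : ℝ → ℝ := fun s => G01 tstar s * ψ s with hF
  set tt : ℕ → ℝ := fun j => (j:ℝ)/N with htt
  have hψc : ContinuousOn ψ (Icc (0:ℝ) 1) := fun x hx => (hψd x hx).continuousWithinAt
  have hFc : ContinuousOn F (Icc (0:ℝ) 1) := ((G01_cont tstar).continuousOn).mul hψc
  -- grid points in [0,1]
  have hmem : ∀ j : ℕ, j ≤ N → tt j ∈ Icc (0:ℝ) 1 := by
    intro j hj
    constructor
    · positivity
    · rw [div_le_one hNR]; exact_mod_cast hj
  have hmono : ∀ j : ℕ, tt j ≤ tt (j+1) := by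
    intro j
    apply (div_le_div_iff_of_pos_right hNR).mpr
    push_cast; linarith
  have hsum2 : (∑ j ∈ Finset.range (N + 1),
      (1 / (N:ℝ)) * trapWeight N j * G01 tstar ((j:ℝ)/N) * ψ ((j:ℝ)/N))
      = ∑ j ∈ Finset.range N, (1/(N:ℝ)) * ((F (tt j) + F (tt (j+1)))/2) := by
    have hsum1 : (∑ j ∈ Finset.range (N + 1),
        (1 / (N:ℝ)) * trapWeight N j * G01 tstar ((j:ℝ)/N) * ψ ((j:ℝ)/N))
        = (1/(N:ℝ)) * ∑ j ∈ Finset.range (N+1), trapWeight N j * F (tt j) := by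
      rw [Finset.mul_sum]
      apply Finset.sum_congr rfl
      intro j _
      simp only [hF, htt]
      ring
    rw [hsum1, resum N hN, Finset.mul_sum]
  have hint : ∀ k, k < N → IntervalIntegrable F volume (tt k) (tt (k+1)) := by
    intro k hk
    apply (hFc.mono _).intervalIntegrable
    rw [uIcc_of_le (hmono k)]
    intro x hx
    exact ⟨le_trans (hmem k (by omega)).1 hx.1, le_trans hx.2 (hmem (k+1) (by omega)).2⟩
  have hsplit : (∫ s in (0:ℝ)..1, F s) = ∑ j ∈ Finset.range N, ∫ s in (tt j)..(tt (j+1)), F s := by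
    rw [intervalIntegral.sum_integral_adjacent_intervals hint]
    have h0 : tt 0 = 0 := by simp [htt]
    have h1 : tt N = 1 := by simp [htt]; omega
    rw [h0, h1]
  set j0 : ℕ := min (Nat.floor (tstar * N)) (N - 1) with hj0
  have hj0mem : j0 ∈ Finset.range N := by
    rw [Finset.mem_range, hj0]; omega
  have hbma : ∀ j : ℕ, tt (j+1) - tt j = 1/(N:ℝ) := by
    intro j
    simp only [htt]
    push_cast
    field_simp
    ring
  have hperj : ∀ j ∈ Finset.range N,
      |(1/(N:ℝ)) * ((F (tt j) + F (tt (j+1)))/2) - ∫ s in (tt j)..(tt (j+1)), F s|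
        ≤ (B0 + 6*B1 + B2) * (1/(N:ℝ))^3 + (if j = j0 then (4*B0 + B1) * (1/(N:ℝ))^2 else 0) := by
    intro j hj
    rw [Finset.mem_range] at hj
    have hab : tt j ≤ tt (j+1) := hmono j
    have hsub : Icc (tt j) (tt (j+1)) ⊆ Icc (0:ℝ) 1 := by
      intro x hx
      exact ⟨le_trans (hmem j (by omega)).1 hx.1, le_trans hx.2 (hmem (j+1) (by omega)).2⟩
    have htrap : (1/(N:ℝ)) * ((F (tt j) + F (tt (j+1)))/2)
        = (tt (j+1) - tt j)/2 * (F (tt j) + F (tt (j+1))) := by rw [hbma j]; ring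
    rw [htrap, abs_sub_comm, hbma j]
    by_cases hjj : j = j0
    · -- kink interval: Lipschitz bound
      rw [if_pos hjj]
      have hlip : ∀ x ∈ Icc (tt j) (tt (j+1)), ∀ y ∈ Icc (tt j) (tt (j+1)),
          |F x - F y| ≤ (4*B0 + B1) * |x - y| := by
        intro x hx y hy
        have hxI := hsub hx; have hyI := hsub hy
        have e : F x - F y = (G01 tstar x - G01 tstar y) * ψ x
            + G01 tstar y * (ψ x - ψ y) := by simp only [hF]; ring
        have h1 : |(G01 tstar x - G01 tstar y) * ψ x| ≤ (4 * |x - y|) * B0 := by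
          rw [abs_mul]
          exact mul_le_mul (G01_lip ht hxI hyI) (hB0 x hxI) (abs_nonneg _) (by positivity)
        have h2 : |G01 tstar y * (ψ x - ψ y)| ≤ 1 * (B1 * |x - y|) := by
          rw [abs_mul]
          exact mul_le_mul (G01_bound ht hyI) (hψlip x hxI y hyI) (abs_nonneg _) (by norm_num)
        calc |F x - F y| = |(G01 tstar x - G01 tstar y) * ψ x + G01 tstar y * (ψ x - ψ y)| := by
              rw [e]
          _ ≤ |(G01 tstar x - G01 tstar y) * ψ x| + |G01 tstar y * (ψ x - ψ y)| := abs_add_le _ _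
          _ ≤ (4 * |x - y|) * B0 + 1 * (B1 * |x - y|) := add_le_add h1 h2
          _ = (4*B0 + B1) * |x - y| := by ring
      have := trap0 hab F (hFc.mono hsub) (by positivity) hlip
      rw [hbma j] at this
      have hpos : (0:ℝ) ≤ (B0 + 6*B1 + B2) * (1/(N:ℝ))^3 := by positivity
      linarith
    · -- smooth interval
      rw [if_neg hjj]
      rcases lt_or_gt_of_ne hjj with hlt | hgt
      · -- j < j0 : entirely left of tstar
        have hble : tt (j+1) ≤ tstar := by
          have hf1 : ((Nat.floor (tstar * N) : ℝ)) ≤ tstar * N :=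
            Nat.floor_le (mul_nonneg ht.1 hNR.le)
          have hf2 : ((j:ℝ) + 1) ≤ (Nat.floor (tstar * N) : ℝ) := by
            have : j + 1 ≤ Nat.floor (tstar * N) := by omega
            exact_mod_cast this
          simp only [htt]
          rw [div_le_iff₀ hNR]
          push_cast
          linarith
        have hpG : ∀ s ∈ Icc (tt j) (tt (j+1)), G01 tstar s
            = (tstar^2 - 2*tstar)/2 * s + s^2/2 := by
          intro s hs
          unfold G01
          rw [if_pos (le_trans hs.2 hble)]
          ring
        have hpd : ∀ x : ℝ, HasDerivAt (fun s => (tstar^2 - 2*tstar)/2 * s + s^2/2)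
            ((tstar^2 - 2*tstar)/2 + x) x := by
          intro x
          have d1 : HasDerivAt (fun s : ℝ => (tstar^2 - 2*tstar)/2 * s)
              ((tstar^2 - 2*tstar)/2 * 1) x := (hasDerivAt_id x).const_mul _
          have d2 : HasDerivAt (fun s : ℝ => s^2/2) ((2:ℕ) * x^1 / 2) x :=
            (hasDerivAt_pow 2 x).div_const 2
          have := d1.add d2
          refine this.congr_deriv ?_
          push_cast
          ring
        have key := goodInterval ht hab hsub ψ ψ₁ B0 B1 B2 hB0p hB1p hB2p hψd hB0 hψlip hB1
          hψ₁lip _ _ hpd (fun s hs => hpG s hs)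
          (fun s hs => by
            have hsI := hsub hs
            rw [abs_le]
            constructor <;> nlinarith [ht.1, ht.2, hsI.1, hsI.2])
          (fun x hx y hy => by
            have e : (tstar^2 - 2*tstar)/2 + x - ((tstar^2 - 2*tstar)/2 + y) = x - y := by ring
            rw [e, one_mul])
        rw [hbma j] at key
        simp only [hF]
        have hpos : (0:ℝ) ≤ 0 := le_refl 0
        calc |(∫ s in (tt j)..(tt (j+1)), G01 tstar s * ψ s)
              - (1/(N:ℝ))/2 * (G01 tstar (tt j) * ψ (tt j) + G01 tstar (tt (j+1)) * ψ (tt (j+1)))|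
            ≤ (B0 + 6*B1 + B2) * (1/(N:ℝ))^3 := key
          _ ≤ (B0 + 6*B1 + B2) * (1/(N:ℝ))^3 + 0 := by linarith
      · -- j > j0 : entirely right of tstar
        have hfloor : Nat.floor (tstar * N) ≤ N - 1 := by
          by_contra hcon
          push_neg at hcon
          have : j0 = N - 1 := by omega
          omega
        have hj0f : j0 = Nat.floor (tstar * N) := by omega
        have hage : tstar < tt j := by
          have h1 : tstar * N < (Nat.floor (tstar * N) : ℝ) + 1 := Nat.lt_floor_add_one _
          have h2 : ((Nat.floor (tstar * N) : ℝ)) + 1 ≤ (j:ℝ) := by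
            have : Nat.floor (tstar * N) + 1 ≤ j := by omega
            exact_mod_cast this
          simp only [htt]
          rw [lt_div_iff₀ hNR]
          linarith
        have hpG : ∀ s ∈ Icc (tt j) (tt (j+1)), G01 tstar s = tstar^2/2 * s - tstar^2/2 := by
          intro s hs
          unfold G01
          rw [if_neg (not_le.mpr (lt_of_lt_of_le hage hs.1))]
          ring
        have hpd : ∀ x : ℝ, HasDerivAt (fun s => tstar^2/2 * s - tstar^2/2) (tstar^2/2) x := by
          intro x
          have d1 : HasDerivAt (fun s : ℝ => tstar^2/2 * s) (tstar^2/2 * 1) x :=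
            (hasDerivAt_id x).const_mul _
          have := d1.sub_const (tstar^2/2)
          refine this.congr_deriv ?_
          ring
        have key := goodInterval ht hab hsub ψ ψ₁ B0 B1 B2 hB0p hB1p hB2p hψd hB0 hψlip hB1
          hψ₁lip _ _ hpd (fun s hs => hpG s hs)
          (fun s hs => by
            rw [abs_le]
            constructor <;> nlinarith [ht.1, ht.2])
          (fun x hx y hy => by
            simp only [sub_self, abs_zero, one_mul]
            positivity)
        rw [hbma j] at key
        simp only [hF]
        calc |(∫ s in (tt j)..(tt (j+1)), G01 tstar s * ψ s)
              - (1/(N:ℝ))/2 * (G01 tstar (tt j) * ψ (tt j) + G01 tstar (tt (j+1)) * ψ (tt (j+1)))|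
            ≤ (B0 + 6*B1 + B2) * (1/(N:ℝ))^3 := key
          _ ≤ (B0 + 6*B1 + B2) * (1/(N:ℝ))^3 + 0 := by linarith
  -- assemble
  rw [hsum2, hsplit, ← Finset.sum_sub_distrib]
  calc |∑ j ∈ Finset.range N, ((1/(N:ℝ)) * ((F (tt j) + F (tt (j+1)))/2)
          - ∫ s in (tt j)..(tt (j+1)), F s)|
      ≤ ∑ j ∈ Finset.range N, |(1/(N:ℝ)) * ((F (tt j) + F (tt (j+1)))/2)
          - ∫ s in (tt j)..(tt (j+1)), F s| := Finset.abs_sum_le_sum_abs _ _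
    _ ≤ ∑ j ∈ Finset.range N, ((B0 + 6*B1 + B2) * (1/(N:ℝ))^3
          + (if j = j0 then (4*B0 + B1) * (1/(N:ℝ))^2 else 0)) :=
        Finset.sum_le_sum hperj
    _ = N * ((B0 + 6*B1 + B2) * (1/(N:ℝ))^3) + (4*B0 + B1) * (1/(N:ℝ))^2 := by
        rw [Finset.sum_add_distrib, Finset.sum_const, Finset.card_range,
          Finset.sum_ite_eq' _ j0 (fun _ => (4*B0 + B1) * (1/(N:ℝ))^2), if_pos hj0mem,
          nsmul_eq_mul]
    _ = (5*B0 + 7*B1 + B2) * (1/(N:ℝ))^2 := by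
        field_simp
        ring

/-- Smoothness in `t` of the integral operator. -/
lemma smoothInt (ψ : ℝ → ℝ) (hψ : ContinuousOn ψ (Icc (0:ℝ) 1)) :
    ContDiffOn ℝ 2 (fun t => ∫ s in (0:ℝ)..1, G01 t s * ψ s) (Icc (0:ℝ) 1) := by
  set ψt : ℝ → ℝ := fun x => ψ (max 0 (min x 1)) with hψtdef
  have hmemI : ∀ x : ℝ, max 0 (min x 1) ∈ Icc (0:ℝ) 1 :=
    fun x => ⟨le_max_left _ _, max_le (by norm_num) (min_le_right x 1)⟩
  have hψt : Continuous ψt :=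
    hψ.comp_continuous (continuous_const.max (continuous_id.min continuous_const)) hmemI
  have hψteq : ∀ x ∈ Icc (0:ℝ) 1, ψt x = ψ x := by
    intro x hx
    simp only [hψtdef]
    rw [min_eq_left hx.2, max_eq_right hx.1]
  set A : ℝ → ℝ := fun t => ∫ s in (0:ℝ)..t, s * ψt s with hAdef
  set B : ℝ → ℝ := fun t => ∫ s in (0:ℝ)..t, s^2 * ψt s with hBdef
  set Cf : ℝ → ℝ := fun t => ∫ s in (0:ℝ)..t, (s-1) * ψt s with hCdef
  have hcA : Continuous fun s : ℝ => s * ψt s := continuous_id.mul hψt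
  have hcB : Continuous fun s : ℝ => s^2 * ψt s := by continuity
  have hcC : Continuous fun s : ℝ => (s-1) * ψt s := by continuity
  have hA : ∀ t : ℝ, HasDerivAt A (t * ψt t) t := fun t =>
    intervalIntegral.integral_hasDerivAt_right (hcA.intervalIntegrable _ _)
      (hcA.stronglyMeasurableAtFilter _ _) hcA.continuousAt
  have hB : ∀ t : ℝ, HasDerivAt B (t^2 * ψt t) t := fun t =>
    intervalIntegral.integral_hasDerivAt_right (hcB.intervalIntegrable _ _)
      (hcB.stronglyMeasurableAtFilter _ _) hcB.continuousAt
  have hC : ∀ t : ℝ, HasDerivAt Cf ((t-1) * ψt t) t := fun t =>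
    intervalIntegral.integral_hasDerivAt_right (hcC.intervalIntegrable _ _)
      (hcC.stronglyMeasurableAtFilter _ _) hcC.continuousAt
  have hAc : Continuous A := continuous_iff_continuousAt.mpr fun t => (hA t).continuousAt
  have hCc : Continuous Cf := continuous_iff_continuousAt.mpr fun t => (hC t).continuousAt
  set W : ℝ → ℝ := fun t => (t^2 - 2*t)/2 * A t + B t / 2 + t^2/2 * (Cf 1 - Cf t) with hWdef
  set W1 : ℝ → ℝ := fun t => (t - 1) * A t + t * (Cf 1 - Cf t) with hW1def
  set W2 : ℝ → ℝ := fun t => A t + Cf 1 - Cf t with hW2def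
  have hq : ∀ t : ℝ, HasDerivAt (fun t : ℝ => (t^2 - 2*t)/2) ((2*t - 2)/2) t := by
    intro t
    have h := ((hasDerivAt_pow 2 t).sub ((hasDerivAt_id t).const_mul 2)).div_const 2
    refine h.congr_deriv ?_
    push_cast; ring
  have hq2 : ∀ t : ℝ, HasDerivAt (fun t : ℝ => t^2/2) (t) t := by
    intro t
    have h := (hasDerivAt_pow 2 t).div_const 2
    refine h.congr_deriv ?_
    push_cast; ring
  have hW : ∀ t : ℝ, HasDerivAt W (W1 t) t := by
    intro t
    have h1 := (hq t).mul (hA t)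
    have h2 := (hB t).div_const 2
    have h3 := (hq2 t).mul ((hasDerivAt_const t (Cf 1)).sub (hC t))
    have h := (h1.add h2).add h3
    refine h.congr_deriv ?_
    simp only [hW1def, Pi.sub_apply]
    ring
  have hW1 : ∀ t : ℝ, HasDerivAt W1 (W2 t) t := by
    intro t
    have h1 := ((hasDerivAt_id t).sub_const 1).mul (hA t)
    have h2 := (hasDerivAt_id t).mul ((hasDerivAt_const t (Cf 1)).sub (hC t))
    have h := h1.add h2
    refine h.congr_deriv ?_
    simp only [hW2def, id_eq, Pi.sub_apply]
    ring
  have hW2c : Continuous W2 := (hAc.add continuous_const).sub hCc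
  have hWsmooth : ContDiff ℝ 2 W := by
    have e2 : (2 : WithTop ℕ∞) = 1 + 1 := by norm_num
    rw [e2, contDiff_succ_iff_deriv]
    refine ⟨fun t => (hW t).differentiableAt, by simp, ?_⟩
    have hdW : deriv W = W1 := funext fun t => (hW t).deriv
    rw [hdW]
    have e1 : (1 : WithTop ℕ∞) = 0 + 1 := by norm_num
    rw [e1, contDiff_succ_iff_deriv]
    refine ⟨fun t => (hW1 t).differentiableAt, by simp, ?_⟩
    have hdW1 : deriv W1 = W2 := funext fun t => (hW1 t).deriv
    rw [hdW1, contDiff_zero]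
    exact hW2c
  apply hWsmooth.contDiffOn.congr
  intro t ht
  -- show ∫₀¹ G01 t s ψ s = W t
  have hGc : Continuous fun s => G01 t s := G01_cont t
  have hFeq : (∫ s in (0:ℝ)..1, G01 t s * ψ s) = ∫ s in (0:ℝ)..1, G01 t s * ψt s := by
    apply intervalIntegral.integral_congr
    intro s hs
    rw [uIcc_of_le (by norm_num : (0:ℝ) ≤ 1)] at hs
    simp only [hψteq s hs]
  have hFc : Continuous fun s => G01 t s * ψt s := hGc.mul hψt
  have hsplit : (∫ s in (0:ℝ)..1, G01 t s * ψt s)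
      = (∫ s in (0:ℝ)..t, G01 t s * ψt s) + ∫ s in t..1, G01 t s * ψt s :=
    (intervalIntegral.integral_add_adjacent_intervals (hFc.intervalIntegrable _ _)
      (hFc.intervalIntegrable _ _)).symm
  have hleft : (∫ s in (0:ℝ)..t, G01 t s * ψt s)
      = (t^2 - 2*t)/2 * A t + (1/2) * B t := by
    have h1 : (∫ s in (0:ℝ)..t, G01 t s * ψt s)
        = ∫ s in (0:ℝ)..t, ((t^2 - 2*t)/2 * (s * ψt s) + (1/2) * (s^2 * ψt s)) := by
      apply intervalIntegral.integral_congr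
      intro s hs
      rw [uIcc_of_le ht.1] at hs
      simp only [G01]
      rw [if_pos hs.2]
      ring
    rw [h1, intervalIntegral.integral_add (f := fun s => (t^2 - 2*t)/2 * (s * ψt s))
        (g := fun s => (1/2:ℝ) * (s^2 * ψt s)) ((continuous_const.mul hcA).intervalIntegrable _ _)
      ((continuous_const.mul hcB).intervalIntegrable _ _),
      intervalIntegral.integral_const_mul, intervalIntegral.integral_const_mul]
  have hright : (∫ s in t..1, G01 t s * ψt s) = t^2/2 * (Cf 1 - Cf t) := by
    have h1 : (∫ s in t..1, G01 t s * ψt s) = ∫ s in t..1, t^2/2 * ((s-1) * ψt s) := by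
      apply intervalIntegral.integral_congr
      intro s hs
      rw [uIcc_of_le ht.2] at hs
      simp only [G01]
      by_cases hst : s ≤ t
      · have hs_eq : s = t := le_antisymm hst hs.1
        subst hs_eq
        rw [if_pos le_rfl]
        ring
      · rw [if_neg hst]
        ring
    rw [h1, intervalIntegral.integral_const_mul]
    congr 1
    rw [hCdef]
    simp only
    rw [← intervalIntegral.integral_interval_sub_left (hcC.intervalIntegrable 0 1)
      (hcC.intervalIntegrable 0 t)]
  rw [hFeq, hsplit, hleft, hright, hWdef]
  ring

/-- Extraction of uniform bounds from `C²` regularity on `[0,1]`. -/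
lemma derivData (ψ : ℝ → ℝ) (hψ : ContDiffOn ℝ 2 ψ (Icc (0:ℝ) 1)) :
    ∃ (ψ₁ : ℝ → ℝ) (B0 B1 B2 : ℝ), 0 ≤ B0 ∧ 0 ≤ B1 ∧ 0 ≤ B2 ∧
      (∀ x ∈ Icc (0:ℝ) 1, HasDerivWithinAt ψ (ψ₁ x) (Icc (0:ℝ) 1) x) ∧
      (∀ x ∈ Icc (0:ℝ) 1, |ψ x| ≤ B0) ∧
      (∀ x ∈ Icc (0:ℝ) 1, ∀ y ∈ Icc (0:ℝ) 1, |ψ x - ψ y| ≤ B1 * |x - y|) ∧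
      (∀ x ∈ Icc (0:ℝ) 1, |ψ₁ x| ≤ B1) ∧
      (∀ x ∈ Icc (0:ℝ) 1, ∀ y ∈ Icc (0:ℝ) 1, |ψ₁ x - ψ₁ y| ≤ B2 * |x - y|) := by
  have hU : UniqueDiffOn ℝ (Icc (0:ℝ) 1) := uniqueDiffOn_Icc zero_lt_one
  set I : Set ℝ := Icc (0:ℝ) 1 with hI
  set ψ₁ : ℝ → ℝ := derivWithin ψ I with hψ₁def
  set ψ₂ : ℝ → ℝ := derivWithin ψ₁ I with hψ₂def
  have hψ₁s : ContDiffOn ℝ 1 ψ₁ I := hψ.derivWithin hU (by norm_num)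
  have hψ₂s : ContDiffOn ℝ 0 ψ₂ I := hψ₁s.derivWithin hU (by norm_num)
  have hd1 : ∀ x ∈ I, HasDerivWithinAt ψ (ψ₁ x) I x :=
    fun x hx => ((hψ.differentiableOn (by norm_num)) x hx).hasDerivWithinAt
  have hd2 : ∀ x ∈ I, HasDerivWithinAt ψ₁ (ψ₂ x) I x :=
    fun x hx => ((hψ₁s.differentiableOn (by norm_num)) x hx).hasDerivWithinAt
  have hne : I.Nonempty := ⟨0, by simp [hI]⟩
  obtain ⟨x0, hx0, hmax0⟩ := isCompact_Icc.exists_isMaxOn hne (hψ.continuousOn.abs)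
  obtain ⟨x1, hx1, hmax1⟩ := isCompact_Icc.exists_isMaxOn hne (hψ₁s.continuousOn.abs)
  obtain ⟨x2, hx2, hmax2⟩ := isCompact_Icc.exists_isMaxOn hne (hψ₂s.continuousOn.abs)
  refine ⟨ψ₁, |ψ x0|, |ψ₁ x1|, |ψ₂ x2|, abs_nonneg _, abs_nonneg _, abs_nonneg _,
    hd1, fun x hx => hmax0 hx, ?_, fun x hx => hmax1 hx, ?_⟩
  · intro x hx y hy
    have key := Convex.norm_image_sub_le_of_norm_hasDerivWithin_le hd1
      (fun z hz => by rw [Real.norm_eq_abs]; exact hmax1 hz) (convex_Icc 0 1) hy hx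
    rw [Real.norm_eq_abs, Real.norm_eq_abs] at key
    exact key
  · intro x hx y hy
    have key := Convex.norm_image_sub_le_of_norm_hasDerivWithin_le hd2
      (fun z hz => by rw [Real.norm_eq_abs]; exact hmax2 hz) (convex_Icc 0 1) hy hx
    rw [Real.norm_eq_abs, Real.norm_eq_abs] at key
    exact key

/-- Total error estimate: if moreover `q = (L1 + L2) M0 < 1` and `u` is the exact solution of
the integral equation, then `max_i |U_k(t_i) − u(t_i)| ≤ M0 p_k d + C h²`, where
`p_k = q^k/(1−q)` and `d = ‖ψ₁ − ψ₀‖`. -/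
theorem total_error_estimate
    (b1 b2 b3 : ℝ) (φ : ℝ → ℝ) (f : ℝ → ℝ → ℝ → ℝ)
    (hφ : ContDiffOn ℝ 2 φ (Icc 0 1)) (hφm : MapsTo φ (Icc 0 1) (Icc 0 1))
    (hf : ContDiffOn ℝ 2 (fun p : ℝ × ℝ × ℝ => f p.1 p.2.1 p.2.2)
      (Icc 0 1 ×ˢ (univ : Set ℝ) ×ˢ (univ : Set ℝ)))
    (L1 L2 : ℝ) (hL1 : 0 ≤ L1) (hL2 : 0 ≤ L2)
    (hLip : ∀ t ∈ Icc (0:ℝ) 1, ∀ u1 u2 v1 v2 : ℝ,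
      |f t u2 v2 - f t u1 v1| ≤ L1 * |u2 - u1| + L2 * |v2 - v1|)
    (M0 : ℝ) (hM0 : IsGreatest ((fun t => ∫ s in (0:ℝ)..1, |G01 t s|) '' Icc 0 1) M0)
    (hq : (L1 + L2) * M0 < 1)
    (u : ℝ → ℝ) (huc : ContinuousOn u (Icc 0 1))
    (hueq : ∀ t ∈ Icc (0:ℝ) 1,
      u t = gq b1 b2 b3 t + ∫ s in (0:ℝ)..1, G01 t s * f s (u s) (u (φ s)))
    (d : ℝ)
    (hd : IsGreatest
      ((fun t => |psiC f φ b1 b2 b3 1 t - psiC f φ b1 b2 b3 0 t|) '' Icc 0 1) d) :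
    ∀ k : ℕ, ∃ C > (0:ℝ), ∀ N : ℕ, 1 ≤ N → ∀ i : ℕ, i ≤ N →
      |UD f φ b1 b2 b3 N k i - u ((i : ℝ) / N)|
        ≤ M0 * (((L1 + L2) * M0) ^ k / (1 - (L1 + L2) * M0)) * d
          + C * (1 / (N:ℝ)) ^ 2 := by
  intro k
  have hI0 : (0:ℝ) ∈ Icc (0:ℝ) 1 := by norm_num
  have hIne : (Icc (0:ℝ) 1).Nonempty := ⟨0, hI0⟩
  have h01 : (0:ℝ) ≤ 1 := by norm_num
  obtain ⟨t0', ht0', hM0eq⟩ := hM0.1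
  have hM0nn : 0 ≤ M0 := by
    rw [← hM0eq]
    exact intervalIntegral.integral_nonneg h01 (fun s _ => abs_nonneg _)
  have hL12 : 0 ≤ L1 + L2 := by linarith
  have hqnn : 0 ≤ (L1+L2)*M0 := mul_nonneg hL12 hM0nn
  have h1q : 0 < 1 - (L1+L2)*M0 := by linarith
  have hdnn : 0 ≤ d := by
    obtain ⟨t1', _, hdeq⟩ := hd.1
    rw [← hdeq]; exact abs_nonneg _
  have hgrid : ∀ N : ℕ, 1 ≤ N → ∀ i : ℕ, i ≤ N → ((i:ℝ)/N) ∈ Icc (0:ℝ) 1 := by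
    intro N hN i hi
    have hNR : (0:ℝ) < N := by exact_mod_cast hN
    constructor
    · positivity
    · rw [div_le_one hNR]; exact_mod_cast hi
  have hgq : ContDiff ℝ 2 (gq b1 b2 b3) := by
    unfold gq
    exact (contDiff_const.add (contDiff_const.mul contDiff_id)).add
      (contDiff_const.mul (contDiff_id.pow 2))
  -- smoothness of the continuous iterates
  have hsmooth : ∀ m : ℕ, ContDiffOn ℝ 2 (psiC f φ b1 b2 b3 m) (Icc (0:ℝ) 1) := by
    intro m
    induction m with
    | zero =>
      have e : psiC f φ b1 b2 b3 0 = (fun p : ℝ × ℝ × ℝ => f p.1 p.2.1 p.2.2)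
          ∘ (fun t => (t, (0:ℝ), (0:ℝ))) := rfl
      rw [e]
      exact hf.comp (contDiffOn_id.prodMk (contDiffOn_const.prodMk contDiffOn_const))
        (fun t ht => ⟨ht, mem_univ _, mem_univ _⟩)
    | succ m ih =>
      have hu : ContDiffOn ℝ 2 (uC f φ b1 b2 b3 m) (Icc (0:ℝ) 1) := by
        unfold uC
        exact (hgq.contDiffOn).add (smoothInt _ ih.continuousOn)
      have e : psiC f φ b1 b2 b3 (m+1) = (fun p : ℝ × ℝ × ℝ => f p.1 p.2.1 p.2.2)
          ∘ (fun t => (t, uC f φ b1 b2 b3 m t, uC f φ b1 b2 b3 m (φ t))) := rfl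
      rw [e]
      exact hf.comp (contDiffOn_id.prodMk (hu.prodMk (hu.comp hφ hφm)))
        (fun t ht => ⟨ht, mem_univ _, mem_univ _⟩)
  set ψs : ℝ → ℝ := fun t => f t (u t) (u (φ t)) with hψsdef
  have hψsc : ContinuousOn ψs (Icc (0:ℝ) 1) := by
    have e : ψs = (fun p : ℝ × ℝ × ℝ => f p.1 p.2.1 p.2.2)
        ∘ (fun t => (t, u t, u (φ t))) := rfl
    rw [e]
    exact hf.continuousOn.comp
      (continuousOn_id.prodMk (huc.prodMk (huc.comp hφ.continuousOn hφm)))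
      (fun t ht => ⟨ht, mem_univ _, mem_univ _⟩)
  have hueq' : ∀ t ∈ Icc (0:ℝ) 1,
      u t = gq b1 b2 b3 t + ∫ s in (0:ℝ)..1, G01 t s * ψs s := fun t ht => hueq t ht
  -- integral difference bound
  have hIB : ∀ χ₁ χ₂ : ℝ → ℝ, ContinuousOn χ₁ (Icc (0:ℝ) 1) → ContinuousOn χ₂ (Icc (0:ℝ) 1) →
      ∀ m : ℝ, 0 ≤ m → (∀ s ∈ Icc (0:ℝ) 1, |χ₁ s - χ₂ s| ≤ m) → ∀ t ∈ Icc (0:ℝ) 1,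
      |(∫ s in (0:ℝ)..1, G01 t s * χ₁ s) - ∫ s in (0:ℝ)..1, G01 t s * χ₂ s| ≤ M0 * m := by
    intro χ₁ χ₂ hc1 hc2 m hm hb t htI
    have hg : Continuous fun s => G01 t s := G01_cont t
    have hu1 : IntervalIntegrable (fun s => G01 t s * χ₁ s) volume 0 1 := by
      apply ContinuousOn.intervalIntegrable
      rw [uIcc_of_le h01]
      exact hg.continuousOn.mul hc1
    have hu2 : IntervalIntegrable (fun s => G01 t s * χ₂ s) volume 0 1 := by
      apply ContinuousOn.intervalIntegrable
      rw [uIcc_of_le h01]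
      exact hg.continuousOn.mul hc2
    rw [← intervalIntegral.integral_sub hu1 hu2]
    have hint1 : IntervalIntegrable (fun s => |G01 t s * χ₁ s - G01 t s * χ₂ s|) volume 0 1 := by
      apply ContinuousOn.intervalIntegrable
      rw [uIcc_of_le h01]
      exact ((hg.continuousOn.mul hc1).sub (hg.continuousOn.mul hc2)).abs
    have hint2 : IntervalIntegrable (fun s => |G01 t s| * m) volume 0 1 :=
      (hg.abs.mul continuous_const).intervalIntegrable _ _
    calc |∫ s in (0:ℝ)..1, (G01 t s * χ₁ s - G01 t s * χ₂ s)|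
        ≤ ∫ s in (0:ℝ)..1, |G01 t s * χ₁ s - G01 t s * χ₂ s| :=
          intervalIntegral.abs_integral_le_integral_abs h01
      _ ≤ ∫ s in (0:ℝ)..1, |G01 t s| * m := by
          apply intervalIntegral.integral_mono_on h01 hint1 hint2
          intro s hs
          rw [← mul_sub, abs_mul]
          exact mul_le_mul_of_nonneg_left (hb s hs) (abs_nonneg _)
      _ = (∫ s in (0:ℝ)..1, |G01 t s|) * m := intervalIntegral.integral_mul_const _ _
      _ ≤ M0 * m := mul_le_mul_of_nonneg_right (hM0.2 ⟨t, htI, rfl⟩) hm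
  -- the contraction estimate
  have hcontr : ∀ m : ℕ, ∀ t ∈ Icc (0:ℝ) 1,
      |psiC f φ b1 b2 b3 m t - ψs t| ≤ ((L1+L2)*M0)^m * (d / (1 - (L1+L2)*M0)) := by
    intro m
    induction m with
    | zero =>
      obtain ⟨t0, ht0I, hmax⟩ := isCompact_Icc.exists_isMaxOn hIne
        (((hsmooth 0).continuousOn.sub hψsc).abs)
      set m0 := |psiC f φ b1 b2 b3 0 t0 - ψs t0| with hm0def
      have hm0b : ∀ s ∈ Icc (0:ℝ) 1, |psiC f φ b1 b2 b3 0 s - ψs s| ≤ m0 :=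
        fun s hs => hmax hs
      have hm0nn : 0 ≤ m0 := abs_nonneg _
      have hu0 : ∀ t ∈ Icc (0:ℝ) 1, |uC f φ b1 b2 b3 0 t - u t| ≤ M0 * m0 := by
        intro t htI
        have e : uC f φ b1 b2 b3 0 t - u t
            = (∫ s in (0:ℝ)..1, G01 t s * psiC f φ b1 b2 b3 0 s)
              - ∫ s in (0:ℝ)..1, G01 t s * ψs s := by
          rw [hueq' t htI]; unfold uC; ring
        rw [e]
        exact hIB _ _ (hsmooth 0).continuousOn hψsc m0 hm0nn hm0b t htI
      have h1 : |psiC f φ b1 b2 b3 1 t0 - psiC f φ b1 b2 b3 0 t0| ≤ d :=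
        hd.2 ⟨t0, ht0I, rfl⟩
      have h2 : |psiC f φ b1 b2 b3 1 t0 - ψs t0|
          ≤ L1 * |uC f φ b1 b2 b3 0 t0 - u t0|
            + L2 * |uC f φ b1 b2 b3 0 (φ t0) - u (φ t0)| :=
        hLip t0 ht0I (u t0) (uC f φ b1 b2 b3 0 t0) (u (φ t0)) (uC f φ b1 b2 b3 0 (φ t0))
      have h3 := hu0 t0 ht0I
      have h4 := hu0 (φ t0) (hφm ht0I)
      have hm0d : m0 ≤ d / (1 - (L1+L2)*M0) := by
        rw [le_div_iff₀ h1q]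
        have tri := abs_sub_le (psiC f φ b1 b2 b3 0 t0) (psiC f φ b1 b2 b3 1 t0) (ψs t0)
        rw [abs_sub_comm (psiC f φ b1 b2 b3 0 t0) (psiC f φ b1 b2 b3 1 t0)] at tri
        have h3' : L1 * |uC f φ b1 b2 b3 0 t0 - u t0| ≤ L1 * (M0 * m0) :=
          mul_le_mul_of_nonneg_left h3 hL1
        have h4' : L2 * |uC f φ b1 b2 b3 0 (φ t0) - u (φ t0)| ≤ L2 * (M0 * m0) :=
          mul_le_mul_of_nonneg_left h4 hL2
        have e : m0 * (1 - (L1+L2)*M0) = m0 - (L1 * (M0*m0) + L2 * (M0*m0)) := by ring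
        rw [e]
        linarith
      intro t htI
      calc |psiC f φ b1 b2 b3 0 t - ψs t| ≤ m0 := hm0b t htI
        _ ≤ d / (1 - (L1+L2)*M0) := hm0d
        _ = ((L1+L2)*M0)^0 * (d / (1 - (L1+L2)*M0)) := by rw [pow_zero, one_mul]
    | succ m ih =>
      intro t htI
      have hmnn : 0 ≤ ((L1+L2)*M0)^m * (d / (1 - (L1+L2)*M0)) := by positivity
      have hum : ∀ s ∈ Icc (0:ℝ) 1, |uC f φ b1 b2 b3 m s - u s|
          ≤ M0 * (((L1+L2)*M0)^m * (d / (1 - (L1+L2)*M0))) := by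
        intro s hsI
        have e : uC f φ b1 b2 b3 m s - u s
            = (∫ x in (0:ℝ)..1, G01 s x * psiC f φ b1 b2 b3 m x)
              - ∫ x in (0:ℝ)..1, G01 s x * ψs x := by
          rw [hueq' s hsI]; unfold uC; ring
        rw [e]
        exact hIB _ _ (hsmooth m).continuousOn hψsc _ hmnn ih s hsI
      have h2 : |psiC f φ b1 b2 b3 (m+1) t - ψs t|
          ≤ L1 * |uC f φ b1 b2 b3 m t - u t| + L2 * |uC f φ b1 b2 b3 m (φ t) - u (φ t)| :=
        hLip t htI (u t) (uC f φ b1 b2 b3 m t) (u (φ t)) (uC f φ b1 b2 b3 m (φ t))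
      have h3 := hum t htI
      have h4 := hum (φ t) (hφm htI)
      calc |psiC f φ b1 b2 b3 (m+1) t - ψs t|
          ≤ L1 * |uC f φ b1 b2 b3 m t - u t| + L2 * |uC f φ b1 b2 b3 m (φ t) - u (φ t)| := h2
        _ ≤ L1 * (M0 * (((L1+L2)*M0)^m * (d / (1 - (L1+L2)*M0))))
            + L2 * (M0 * (((L1+L2)*M0)^m * (d / (1 - (L1+L2)*M0)))) :=
            add_le_add (mul_le_mul_of_nonneg_left h3 hL1) (mul_le_mul_of_nonneg_left h4 hL2)
        _ = ((L1+L2)*M0)^(m+1) * (d / (1 - (L1+L2)*M0)) := by ring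
  -- continuous error at level k
  have hucont : ∀ t ∈ Icc (0:ℝ) 1, |uC f φ b1 b2 b3 k t - u t|
      ≤ M0 * (((L1+L2)*M0)^k / (1 - (L1+L2)*M0)) * d := by
    intro t htI
    have hmnn : 0 ≤ ((L1+L2)*M0)^k * (d / (1 - (L1+L2)*M0)) := by positivity
    have e : uC f φ b1 b2 b3 k t - u t
        = (∫ x in (0:ℝ)..1, G01 t x * psiC f φ b1 b2 b3 k x)
          - ∫ x in (0:ℝ)..1, G01 t x * ψs x := by
      rw [hueq' t htI]; unfold uC; ring
    rw [e]
    calc |(∫ x in (0:ℝ)..1, G01 t x * psiC f φ b1 b2 b3 k x)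
          - ∫ x in (0:ℝ)..1, G01 t x * ψs x|
        ≤ M0 * (((L1+L2)*M0)^k * (d / (1 - (L1+L2)*M0))) :=
          hIB _ _ (hsmooth k).continuousOn hψsc _ hmnn (hcontr k) t htI
      _ = M0 * (((L1+L2)*M0)^k / (1 - (L1+L2)*M0)) * d := by ring
  have hw : ∀ N j : ℕ, 0 ≤ trapWeight N j ∧ trapWeight N j ≤ 1 := by
    intro N j; unfold trapWeight; split_ifs <;> norm_num
  -- the quadrature bound at level m, given a grid bound on Ψ
  have hUlem : ∀ (m : ℕ) (C : ℝ), 0 ≤ C →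
      (∀ N : ℕ, 1 ≤ N → ∀ j : ℕ, j ≤ N →
        |PsiD f φ b1 b2 b3 N m j - psiC f φ b1 b2 b3 m ((j:ℝ)/N)| ≤ C * (1/(N:ℝ))^2) →
      ∃ CU : ℝ, 0 < CU ∧ ∀ N : ℕ, 1 ≤ N → ∀ tstar ∈ Icc (0:ℝ) 1,
        |(∑ j ∈ Finset.range (N+1),
            (1/(N:ℝ)) * trapWeight N j * G01 tstar ((j:ℝ)/N) * PsiD f φ b1 b2 b3 N m j)
          - ∫ s in (0:ℝ)..1, G01 tstar s * psiC f φ b1 b2 b3 m s| ≤ CU * (1/(N:ℝ))^2 := by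
    intro m C hC hP
    obtain ⟨ψ₁, B0, B1, B2, hB0p, hB1p, hB2p, hder, hb0, hlip, hb1, hlip1⟩ :=
      derivData _ (hsmooth m)
    refine ⟨2*C + (5*B0 + 7*B1 + B2) + 1, by positivity, ?_⟩
    intro N hN tstar hts
    have hNR : (0:ℝ) < N := by exact_mod_cast hN
    have hh2 : (0:ℝ) ≤ (1/(N:ℝ))^2 := by positivity
    set Y : ℝ := ∑ j ∈ Finset.range (N+1),
        (1/(N:ℝ)) * trapWeight N j * G01 tstar ((j:ℝ)/N) * psiC f φ b1 b2 b3 m ((j:ℝ)/N)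
      with hYdef
    have hterm1 : |(∑ j ∈ Finset.range (N+1),
        (1/(N:ℝ)) * trapWeight N j * G01 tstar ((j:ℝ)/N) * PsiD f φ b1 b2 b3 N m j) - Y|
        ≤ 2 * (C * (1/(N:ℝ))^2) := by
      rw [hYdef, ← Finset.sum_sub_distrib]
      have hper : ∀ j ∈ Finset.range (N+1),
          |(1/(N:ℝ)) * trapWeight N j * G01 tstar ((j:ℝ)/N) * PsiD f φ b1 b2 b3 N m j
            - (1/(N:ℝ)) * trapWeight N j * G01 tstar ((j:ℝ)/N) * psiC f φ b1 b2 b3 m ((j:ℝ)/N)|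
          ≤ (1/(N:ℝ)) * (C * (1/(N:ℝ))^2) := by
        intro j hj
        rw [Finset.mem_range] at hj
        have hjN : j ≤ N := by omega
        have hcoef : |(1/(N:ℝ)) * trapWeight N j * G01 tstar ((j:ℝ)/N)| ≤ 1/(N:ℝ) := by
          have ha : |1/(N:ℝ)| = 1/(N:ℝ) := abs_of_nonneg (by positivity)
          have hwabs : |trapWeight N j| ≤ 1 := abs_le.mpr ⟨by linarith [(hw N j).1], (hw N j).2⟩
          have hGb : |G01 tstar ((j:ℝ)/N)| ≤ 1 := G01_bound hts (hgrid N hN j hjN)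
          calc |(1/(N:ℝ)) * trapWeight N j * G01 tstar ((j:ℝ)/N)|
              = |(1/(N:ℝ)) * trapWeight N j| * |G01 tstar ((j:ℝ)/N)| := abs_mul _ _
            _ ≤ (1/(N:ℝ)) * 1 := by
                apply mul_le_mul _ hGb (abs_nonneg _) (by positivity)
                rw [abs_mul, ha]
                calc (1/(N:ℝ)) * |trapWeight N j| ≤ (1/(N:ℝ)) * 1 :=
                      mul_le_mul_of_nonneg_left hwabs (by positivity)
                  _ = 1/(N:ℝ) := mul_one _
            _ = 1/(N:ℝ) := mul_one _
        have e : (1/(N:ℝ)) * trapWeight N j * G01 tstar ((j:ℝ)/N) * PsiD f φ b1 b2 b3 N m j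
            - (1/(N:ℝ)) * trapWeight N j * G01 tstar ((j:ℝ)/N) * psiC f φ b1 b2 b3 m ((j:ℝ)/N)
            = ((1/(N:ℝ)) * trapWeight N j * G01 tstar ((j:ℝ)/N))
              * (PsiD f φ b1 b2 b3 N m j - psiC f φ b1 b2 b3 m ((j:ℝ)/N)) := by ring
        rw [e, abs_mul]
        exact mul_le_mul hcoef (hP N hN j hjN) (abs_nonneg _) (by positivity)
      calc |∑ j ∈ Finset.range (N+1),
            ((1/(N:ℝ)) * trapWeight N j * G01 tstar ((j:ℝ)/N) * PsiD f φ b1 b2 b3 N m j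
            - (1/(N:ℝ)) * trapWeight N j * G01 tstar ((j:ℝ)/N) * psiC f φ b1 b2 b3 m ((j:ℝ)/N))|
          ≤ ∑ j ∈ Finset.range (N+1),
            |(1/(N:ℝ)) * trapWeight N j * G01 tstar ((j:ℝ)/N) * PsiD f φ b1 b2 b3 N m j
            - (1/(N:ℝ)) * trapWeight N j * G01 tstar ((j:ℝ)/N) * psiC f φ b1 b2 b3 m ((j:ℝ)/N)| :=
            Finset.abs_sum_le_sum_abs _ _
        _ ≤ ∑ _j ∈ Finset.range (N+1), (1/(N:ℝ)) * (C * (1/(N:ℝ))^2) :=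
            Finset.sum_le_sum hper
        _ = ((N:ℝ)+1) * ((1/(N:ℝ)) * (C * (1/(N:ℝ))^2)) := by
            rw [Finset.sum_const, Finset.card_range, nsmul_eq_mul]
            push_cast
            ring
        _ ≤ 2 * (C * (1/(N:ℝ))^2) := by
            have e1 : ((N:ℝ)+1) * ((1/(N:ℝ)) * (C * (1/(N:ℝ))^2))
                = (((N:ℝ)+1)/(N:ℝ)) * (C * (1/(N:ℝ))^2) := by ring
            rw [e1]
            apply mul_le_mul_of_nonneg_right _ (by positivity)
            rw [div_le_iff₀ hNR]
            have : (1:ℝ) ≤ N := by exact_mod_cast hN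
            linarith
    have hterm2 : |Y - ∫ s in (0:ℝ)..1, G01 tstar s * psiC f φ b1 b2 b3 m s|
        ≤ (5*B0 + 7*B1 + B2) * (1/(N:ℝ))^2 := by
      rw [hYdef]
      exact trapMaster hts _ ψ₁ B0 B1 B2 hB0p hB1p hB2p hder hb0 hlip hb1 hlip1 N hN
    calc |(∑ j ∈ Finset.range (N+1),
          (1/(N:ℝ)) * trapWeight N j * G01 tstar ((j:ℝ)/N) * PsiD f φ b1 b2 b3 N m j)
          - ∫ s in (0:ℝ)..1, G01 tstar s * psiC f φ b1 b2 b3 m s|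
        ≤ |(∑ j ∈ Finset.range (N+1),
            (1/(N:ℝ)) * trapWeight N j * G01 tstar ((j:ℝ)/N) * PsiD f φ b1 b2 b3 N m j) - Y|
          + |Y - ∫ s in (0:ℝ)..1, G01 tstar s * psiC f φ b1 b2 b3 m s| := abs_sub_le _ _ _
      _ ≤ 2 * (C * (1/(N:ℝ))^2) + (5*B0 + 7*B1 + B2) * (1/(N:ℝ))^2 := add_le_add hterm1 hterm2
      _ ≤ (2*C + (5*B0 + 7*B1 + B2) + 1) * (1/(N:ℝ))^2 := by nlinarith
  -- discrete induction
  have hdisc : ∀ m : ℕ, ∃ C : ℝ, 0 < C ∧ ∀ N : ℕ, 1 ≤ N → ∀ j : ℕ, j ≤ N →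
      |PsiD f φ b1 b2 b3 N m j - psiC f φ b1 b2 b3 m ((j:ℝ)/N)| ≤ C * (1/(N:ℝ))^2 := by
    intro m
    induction m with
    | zero =>
      refine ⟨1, one_pos, ?_⟩
      intro N hN j hj
      have e : PsiD f φ b1 b2 b3 N 0 j - psiC f φ b1 b2 b3 0 ((j:ℝ)/N) = 0 := sub_self _
      rw [e, abs_zero]
      positivity
    | succ m ihm =>
      obtain ⟨C, hC, hP⟩ := ihm
      obtain ⟨CU, hCU, hU⟩ := hUlem m C hC.le hP
      refine ⟨(L1+L2)*CU + 1, by positivity, ?_⟩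
      intro N hN i hi
      have hh2 : (0:ℝ) ≤ (1/(N:ℝ))^2 := by positivity
      have htiI := hgrid N hN i hi
      have hφtiI := hφm htiI
      have h2 : |PsiD f φ b1 b2 b3 N (m+1) i - psiC f φ b1 b2 b3 (m+1) ((i:ℝ)/N)|
          ≤ L1 * |(gq b1 b2 b3 ((i:ℝ)/N) + ∑ j ∈ Finset.range (N+1),
              (1/(N:ℝ)) * trapWeight N j * G01 ((i:ℝ)/N) ((j:ℝ)/N) * PsiD f φ b1 b2 b3 N m j)
              - (gq b1 b2 b3 ((i:ℝ)/N)
                + ∫ s in (0:ℝ)..1, G01 ((i:ℝ)/N) s * psiC f φ b1 b2 b3 m s)|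
            + L2 * |(gq b1 b2 b3 (φ ((i:ℝ)/N)) + ∑ j ∈ Finset.range (N+1),
              (1/(N:ℝ)) * trapWeight N j * G01 (φ ((i:ℝ)/N)) ((j:ℝ)/N) * PsiD f φ b1 b2 b3 N m j)
              - (gq b1 b2 b3 (φ ((i:ℝ)/N))
                + ∫ s in (0:ℝ)..1, G01 (φ ((i:ℝ)/N)) s * psiC f φ b1 b2 b3 m s)| :=
        hLip ((i:ℝ)/N) htiI _ _ _ _
      rw [add_sub_add_left_eq_sub, add_sub_add_left_eq_sub] at h2
      have h3 := hU N hN ((i:ℝ)/N) htiI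
      have h4 := hU N hN (φ ((i:ℝ)/N)) hφtiI
      have h5 : L1 * |(∑ j ∈ Finset.range (N+1),
              (1/(N:ℝ)) * trapWeight N j * G01 ((i:ℝ)/N) ((j:ℝ)/N) * PsiD f φ b1 b2 b3 N m j)
              - ∫ s in (0:ℝ)..1, G01 ((i:ℝ)/N) s * psiC f φ b1 b2 b3 m s|
          ≤ L1 * (CU * (1/(N:ℝ))^2) := mul_le_mul_of_nonneg_left h3 hL1
      have h6 : L2 * |(∑ j ∈ Finset.range (N+1),
              (1/(N:ℝ)) * trapWeight N j * G01 (φ ((i:ℝ)/N)) ((j:ℝ)/N) * PsiD f φ b1 b2 b3 N m j)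
              - ∫ s in (0:ℝ)..1, G01 (φ ((i:ℝ)/N)) s * psiC f φ b1 b2 b3 m s|
          ≤ L2 * (CU * (1/(N:ℝ))^2) := mul_le_mul_of_nonneg_left h4 hL2
      have e : ((L1+L2)*CU + 1) * (1/(N:ℝ))^2
          = L1 * (CU * (1/(N:ℝ))^2) + L2 * (CU * (1/(N:ℝ))^2) + (1/(N:ℝ))^2 := by ring
      rw [e]
      linarith
  -- final assembly
  obtain ⟨C, hCpos, hP⟩ := hdisc k
  obtain ⟨CU, hCU, hUbd⟩ := hUlem k C hCpos.le hP
  refine ⟨CU, hCU, ?_⟩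
  intro N hN i hi
  have htiI := hgrid N hN i hi
  have e : UD f φ b1 b2 b3 N k i - uC f φ b1 b2 b3 k ((i:ℝ)/N)
      = (∑ j ∈ Finset.range (N+1),
          (1/(N:ℝ)) * trapWeight N j * G01 ((i:ℝ)/N) ((j:ℝ)/N) * PsiD f φ b1 b2 b3 N k j)
        - ∫ s in (0:ℝ)..1, G01 ((i:ℝ)/N) s * psiC f φ b1 b2 b3 k s := by
    unfold UD uC
    ring
  calc |UD f φ b1 b2 b3 N k i - u ((i:ℝ)/N)|
      ≤ |UD f φ b1 b2 b3 N k i - uC f φ b1 b2 b3 k ((i:ℝ)/N)|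
        + |uC f φ b1 b2 b3 k ((i:ℝ)/N) - u ((i:ℝ)/N)| := abs_sub_le _ _ _
    _ ≤ CU * (1/(N:ℝ))^2 + M0 * (((L1+L2)*M0)^k / (1 - (L1+L2)*M0)) * d := by
        apply add_le_add
        · rw [e]; exact hUbd N hN ((i:ℝ)/N) htiI
        · exact hucont ((i:ℝ)/N) htiI
    _ = M0 * (((L1+L2)*M0)^k / (1 - (L1+L2)*M0)) * d + CU * (1/(N:ℝ))^2 := by ring
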